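/- arXiv:1403.5303 — 2 statements merged into one kernel-verified Lean document; each statement's English description precedes it below -/
import Mathlib

section
/- Let A be a cocomplete category, c a comonad on A whose underlying functor preserves colimits of shape J for a filtered category J, and X a c-coalgebra whose underlying object u(X) is J-presentable in A (i.e., Hom_A(u(X), −) preserves colimits of shape J). Then X is J-presentable in the category of c-coalgebras, i.e., Hom_{A_c}(X, −) preserves colimits of shape J. -/
open CategoryTheory CategoryTheory.Limits Opposite

/-- Let `A` be a cocomplete category, `c` a comonad on `A` whose underlying functor
preserves colimits of shape `J` for a filtered category `J`, and `X` a `c`-coalgebra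
whose underlying object `u(X)` is `J`-presentable in `A` (i.e. `Hom_A(u(X), -)`
preserves colimits of shape `J`).  Then `X` is `J`-presentable in the category of
`c`-coalgebras, i.e. `Hom_{A_c}(X, -)` preserves colimits of shape `J`. -/
theorem coalgebra_presentable_of_underlying_presentable {A : Type u} [Category.{v} A]
    [HasColimits A] (c : Comonad A) (J : Type v) [SmallCategory J] [IsFiltered J]
    [PreservesColimitsOfShape J c.toFunctor] (X : c.Coalgebra)
    (hX : Nonempty (PreservesColimitsOfShape J (coyoneda.obj (op (c.forget.obj X))))) :
    Nonempty (PreservesColimitsOfShape J (coyoneda.obj (op X))) := by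
  obtain ⟨hX⟩ := hX
  refine ⟨⟨fun {F} => ?_⟩⟩
  haveI : HasColimit F := Comonad.hasColimit_of_comp_forget_hasColimit F
  set cc := colimit.cocone F with hcc_def
  have hcc : IsColimit cc := colimit.isColimit F
  -- the underlying cocone in `A` is a colimit
  have hu : IsColimit (c.forget.mapCocone cc) := isColimitOfPreserves c.forget hcc
  -- `Hom(uX, -)` applied to the underlying cocone is a colimit in `Type`
  have hAu : IsColimit ((coyoneda.obj (op (c.forget.obj X))).mapCocone
      (c.forget.mapCocone cc)) := isColimitOfPreserves _ hu
  -- `c` applied to the underlying cocone is a colimit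
  have hc : IsColimit (c.toFunctor.mapCocone (c.forget.mapCocone cc)) :=
    isColimitOfPreserves _ hu
  have hAc : IsColimit ((coyoneda.obj (op (c.forget.obj X))).mapCocone
      (c.toFunctor.mapCocone (c.forget.mapCocone cc))) := isColimitOfPreserves _ hc
  refine preservesColimit_of_preserves_colimit_cocone hcc ?_
  refine Types.FilteredColimit.isColimitOf _ _ ?_ ?_
  · -- joint surjectivity
    intro f
    obtain ⟨j, g, hg⟩ := Types.jointly_surjective _ hAu f.f
    dsimp at hg
    change X.A ⟶ (F.obj j).A at g
    change g ≫ (cc.ι.app j).f = f.f at hg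
    -- the two comparison maps `X.A ⟶ c.obj (F.obj j).A`
    have key : ((coyoneda.obj (op (c.forget.obj X))).mapCocone
          (c.toFunctor.mapCocone (c.forget.mapCocone cc))).ι.app j (X.a ≫ c.map g) =
        ((coyoneda.obj (op (c.forget.obj X))).mapCocone
          (c.toFunctor.mapCocone (c.forget.mapCocone cc))).ι.app j (g ≫ (F.obj j).a) := by
      dsimp
      change (X.a ≫ c.map g) ≫ c.map (cc.ι.app j).f = (g ≫ (F.obj j).a) ≫ c.map (cc.ι.app j).f
      rw [Category.assoc, Category.assoc, ← Functor.map_comp, hg, f.h,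
        (cc.ι.app j).h]
      simp [reassoc_of% hg]
    rw [Types.FilteredColimit.isColimit_eq_iff _ hAc] at key
    obtain ⟨k, p, q, hpq⟩ := key
    dsimp at hpq
    change (X.a ≫ c.map g) ≫ c.map (F.map p).f = (g ≫ (F.obj j).a) ≫ c.map (F.map q).f at hpq
    have hm : p ≫ IsFiltered.coeqHom p q = q ≫ IsFiltered.coeqHom p q :=
      IsFiltered.coeq_condition p q
    set r := IsFiltered.coeqHom p q with hr
    refine ⟨IsFiltered.coeq p q, ⟨g ≫ (F.map (p ≫ r)).f, ?_⟩, ?_⟩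
    · calc X.a ≫ c.map (g ≫ (F.map (p ≫ r)).f)
          = (X.a ≫ c.map g ≫ c.map (F.map p).f) ≫ c.map (F.map r).f := by
            rw [F.map_comp]; simp [Functor.map_comp]
        _ = (g ≫ (F.obj j).a ≫ c.map (F.map q).f) ≫ c.map (F.map r).f := by
            simpa using hpq =≫ c.map (F.map r).f
        _ = g ≫ (F.obj j).a ≫ c.map (F.map (q ≫ r)).f := by
            rw [F.map_comp]; simp [Functor.map_comp]
        _ = g ≫ (F.map (q ≫ r)).f ≫ (F.obj (IsFiltered.coeq p q)).a := by
            rw [(F.map (q ≫ r)).h]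
        _ = (g ≫ (F.map (p ≫ r)).f) ≫ (F.obj (IsFiltered.coeq p q)).a := by
            rw [hm]; simp
    · dsimp
      ext1
      have hw := congrArg Comonad.Coalgebra.Hom.f (cc.w (p ≫ r))
      dsimp at hw ⊢
      rw [← hg, Category.assoc, hw]
  · -- separation
    intro i j fi fj hij
    dsimp at hij
    have : ((coyoneda.obj (op (c.forget.obj X))).mapCocone (c.forget.mapCocone cc)).ι.app i fi.f =
        ((coyoneda.obj (op (c.forget.obj X))).mapCocone (c.forget.mapCocone cc)).ι.app j fj.f := by
      dsimp
      exact congrArg Comonad.Coalgebra.Hom.f hij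
    obtain ⟨k, p, q, hpq⟩ := (Types.FilteredColimit.isColimit_eq_iff _ hAu).mp this
    dsimp at hpq
    refine ⟨k, p, q, ?_⟩
    dsimp
    ext1
    exact hpq
end

section
/- Let A be a cocomplete category, c a comonad on A whose underlying functor preserves colimits of shape J for a filtered category J, and X a c-coalgebra that is J-presentable in A_c (i.e., Hom_{A_c}(X, −) preserves colimits of shape J). Then the underlying object u(X) is J-presentable in A. -/
open CategoryTheory CategoryTheory.Limits Opposite

/-- Let `A` be a cocomplete category, `c` a comonad on `A` whose underlying functor
preserves colimits of shape `J` for a filtered category `J`, and `X` a `c`-coalgebra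
that is `J`-presentable in `A_c` (i.e. `Hom_{A_c}(X, -)` preserves colimits of shape
`J`).  Then the underlying object `u(X)` is `J`-presentable in `A`. -/
theorem underlying_presentable_of_coalgebra_presentable {A : Type u} [Category.{v} A]
    [HasColimits A] (c : Comonad A) (J : Type v) [SmallCategory J] [IsFiltered J]
    [PreservesColimitsOfShape J c.toFunctor] (X : c.Coalgebra)
    (hX : Nonempty (PreservesColimitsOfShape J (coyoneda.obj (op X)))) :
    Nonempty (PreservesColimitsOfShape J (coyoneda.obj (op (c.forget.obj X)))) := by
  obtain ⟨hX⟩ := hX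
  -- cofree ⋙ forget is isomorphic to the comonad's functor, hence preserves J-colimits
  have e : c.cofree ⋙ c.forget ≅ c.toFunctor :=
    NatIso.ofComponents (fun Y => Iso.refl _) (by intros; exact (Category.comp_id _).trans (Category.id_comp _).symm)
  have h1 : PreservesColimitsOfShape J (c.cofree ⋙ c.forget) :=
    preservesColimitsOfShape_of_natIso e.symm
  -- forget reflects colimits (it creates them), so cofree preserves J-colimits
  have h2 : PreservesColimitsOfShape J c.cofree :=
    preservesColimitsOfShape_of_reflects_of_preserves c.cofree c.forget
  have h3 : PreservesColimitsOfShape J (c.cofree ⋙ coyoneda.obj (op X)) :=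
    comp_preservesColimitsOfShape _ _
  -- transfer along the adjunction isomorphism Hom(uX, -) ≅ Hom(X, cofree -)
  have iso : c.cofree ⋙ coyoneda.obj (op X) ≅ coyoneda.obj (op (c.forget.obj X)) :=
    NatIso.ofComponents
      (fun Y => Equiv.toIso (c.adj.homEquiv X Y).symm)
      (by
        intro Y Z f
        ext g
        exact c.adj.homEquiv_naturality_right_symm g f)
  exact ⟨preservesColimitsOfShape_of_natIso iso⟩
end
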